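/- arXiv:2312.14849 — 6 statements merged into one kernel-verified Lean document; each statement's English description precedes it below -/
import Mathlib

section
/- Let p be a probability density on ℝ^n, σ > 0, and let φ_σ(v) = (2πσ²)^{−n/2} exp(−‖v‖²/(2σ²)) denote the Gaussian kernel. Define the smoothed density p_σ(ũ) = ∫ φ_σ(ũ − u) p(u) du and assume p_σ(ũ) > 0 for all ũ, so that the score ∇ log p_σ is defined (p_σ is smooth). Let s : ℝ^n → ℝ^n be measurable with ∫∫ ‖s(ũ)‖² φ_σ(ũ−u) p(u) dũ du < ∞, and assume ∫ ‖∇ log p_σ(ũ)‖² p_σ(ũ) dũ < ∞ and ∫∫ ‖(u−ũ)/σ²‖² φ_σ(ũ−u) p(u) dũ du < ∞. Then E_{ũ∼p_σ}[ ‖s(ũ) − ∇ log p_σ(ũ)‖² ] = E_{u∼p} E_{ũ∼N(u,σ²I)}[ ‖s(ũ) − (u−ũ)/σ²‖² ] + C, where C = E_{ũ∼p_σ}[‖∇ log p_σ(ũ)‖²] − E_{u,ũ}[‖(u−ũ)/σ²‖²] does not depend on s. In particular, the explicit score matching objective and the denoising score matching objective have the same minimizers in s. -/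
open MeasureTheory Real InnerProductSpace Metric

theorem aux_rexp_bound (σ r : ℝ) (hσ : 0 < σ) (hr : 0 ≤ r) :
    r * Real.exp (-r ^ 2 / (2 * σ ^ 2)) ≤ 2 * σ := by
  have h1 : Real.exp (-r ^ 2 / (2 * σ ^ 2)) ≤ Real.exp (-(r ^ 2 / (4 * σ ^ 2))) := by
    apply Real.exp_le_exp.2
    rw [neg_div, neg_le_neg_iff]
    apply div_le_div_of_nonneg_left (by positivity) (by positivity) (by nlinarith)
  have h2 : r * Real.exp (-(r ^ 2 / (4 * σ ^ 2))) ≤ 2 * σ := by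
    rw [Real.exp_neg]
    rw [mul_inv_le_iff₀ (Real.exp_pos _)]
    have he := Real.add_one_le_exp (r ^ 2 / (4 * σ ^ 2))
    have h3 : r ≤ 2 * σ * (r ^ 2 / (4 * σ ^ 2) + 1) := by
      have h4 : 2 * σ * (r ^ 2 / (4 * σ ^ 2) + 1) = r ^ 2 / (2 * σ) + 2 * σ := by
        field_simp; ring
      rw [h4, div_add' _ _ _ (by positivity), le_div_iff₀ (by positivity)]
      nlinarith [sq_nonneg (r - 2 * σ)]
    nlinarith [Real.exp_pos (r ^ 2 / (4 * σ ^ 2))]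
  calc r * Real.exp (-r ^ 2 / (2 * σ ^ 2)) ≤ r * Real.exp (-(r ^ 2 / (4 * σ ^ 2))) :=
        mul_le_mul_of_nonneg_left h1 hr
    _ ≤ 2 * σ := h2

theorem aux_hasFDerivAt_phi {n : ℕ} {σ : ℝ} (hσ : 0 < σ)
    {φσ : EuclideanSpace ℝ (Fin n) → ℝ}
    (hφσ : ∀ v, φσ v = (2 * π * σ ^ 2) ^ (-(n : ℝ) / 2) * Real.exp (-‖v‖ ^ 2 / (2 * σ ^ 2)))
    (v : EuclideanSpace ℝ (Fin n)) :
    HasFDerivAt φσ ((-((σ ^ 2)⁻¹ * φσ v)) • (innerSL ℝ v)) v := by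
  set K0 : ℝ := (2 * π * σ ^ 2) ^ (-(n : ℝ) / 2) with hK0
  have h1 : HasFDerivAt (fun w : EuclideanSpace ℝ (Fin n) => ‖w‖ ^ 2)
      (2 • (innerSL ℝ v : EuclideanSpace ℝ (Fin n) →L[ℝ] ℝ)) v := by
    simpa using (hasFDerivAt_id v).norm_sq
  have h2 := (h1.const_mul (-(2 * σ ^ 2)⁻¹)).exp.const_mul K0
  have heq : (fun w : EuclideanSpace ℝ (Fin n) =>
      K0 * Real.exp (-(2 * σ ^ 2)⁻¹ * ‖w‖ ^ 2)) = φσ := by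
    funext w; rw [hφσ w]; ring_nf
  rw [heq] at h2
  have ht : -(2 * σ ^ 2)⁻¹ * ‖v‖ ^ 2 = -‖v‖ ^ 2 / (2 * σ ^ 2) := by ring
  rw [ht] at h2
  refine h2.congr_fderiv (Eq.symm ?_)
  ext w
  simp only [ContinuousLinearMap.coe_smul', Pi.smul_apply, smul_eq_mul, innerSL_apply_apply,
    ContinuousLinearMap.smul_apply, nsmul_eq_mul, Nat.cast_ofNat]
  rw [hφσ v]
  ring

theorem aux_hasGradientAt {n : ℕ} {σ : ℝ} (hσ : 0 < σ)
    {p φσ : EuclideanSpace ℝ (Fin n) → ℝ}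
    (hp_meas : Measurable p) (hp_nonneg : ∀ u, 0 ≤ p u) (hp_int : Integrable p)
    (hφσ : ∀ v, φσ v = (2 * π * σ ^ 2) ^ (-(n : ℝ) / 2) * Real.exp (-‖v‖ ^ 2 / (2 * σ ^ 2)))
    (x₀ : EuclideanSpace ℝ (Fin n)) :
    HasGradientAt (fun x => ∫ u, φσ (x - u) * p u)
      (∫ u, (φσ (x₀ - u) * p u) • ((σ ^ 2)⁻¹ • (u - x₀))) x₀ := by
  set K0 : ℝ := (2 * π * σ ^ 2) ^ (-(n : ℝ) / 2) with hK0
  have hK0pos : 0 < K0 := Real.rpow_pos_of_pos (by positivity) _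
  have hφ_nonneg : ∀ v, 0 ≤ φσ v := fun v => by rw [hφσ]; positivity
  have hφ_cont : Continuous φσ := by
    have : φσ = fun v => K0 * Real.exp (-‖v‖ ^ 2 / (2 * σ ^ 2)) := funext hφσ
    rw [this]; fun_prop
  -- key norm bound on the derivative
  have hM : ∀ v : EuclideanSpace ℝ (Fin n),
      (σ ^ 2)⁻¹ * φσ v * ‖v‖ ≤ (σ ^ 2)⁻¹ * K0 * (2 * σ) := by
    intro v
    have h1 : ‖v‖ * Real.exp (-‖v‖ ^ 2 / (2 * σ ^ 2)) ≤ 2 * σ :=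
      aux_rexp_bound σ ‖v‖ hσ (norm_nonneg v)
    rw [hφσ v]
    have h2 : (σ ^ 2)⁻¹ * (K0 * Real.exp (-‖v‖ ^ 2 / (2 * σ ^ 2))) * ‖v‖
        = (σ ^ 2)⁻¹ * K0 * (‖v‖ * Real.exp (-‖v‖ ^ 2 / (2 * σ ^ 2))) := by ring
    rw [h2]
    have : 0 ≤ (σ ^ 2)⁻¹ * K0 := by positivity
    exact mul_le_mul_of_nonneg_left h1 this
  -- the FDeriv form
  set F' : EuclideanSpace ℝ (Fin n) → EuclideanSpace ℝ (Fin n) →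
      (EuclideanSpace ℝ (Fin n) →L[ℝ] ℝ) :=
    fun x u => p u • ((-((σ ^ 2)⁻¹ * φσ (x - u))) • (innerSL ℝ (x - u))) with hF'
  have hderiv : ∀ u x, HasFDerivAt (fun x => φσ (x - u) * p u) (F' x u) x := by
    intro u x
    have h1 := (aux_hasFDerivAt_phi hσ hφσ (x - u)).comp x
      ((hasFDerivAt_id x).sub_const u)
    have h2 := h1.mul_const (p u)
    exact h2.congr_fderiv rfl
  have hnormF' : ∀ x u, ‖F' x u‖ ≤ ((σ ^ 2)⁻¹ * K0 * (2 * σ)) * p u := by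
    intro x u
    apply ContinuousLinearMap.opNorm_le_bound _
      (mul_nonneg (mul_nonneg (mul_nonneg (inv_nonneg.2 (sq_nonneg σ)) hK0pos.le)
        (by linarith)) (hp_nonneg u))
    intro w
    have h1 : (F' x u) w = p u * (-((σ ^ 2)⁻¹ * φσ (x - u)) * (inner ℝ (x - u) w : ℝ)) := by
      simp only [hF', ContinuousLinearMap.smul_apply, smul_eq_mul, innerSL_apply_apply]
    rw [h1, Real.norm_eq_abs, abs_mul, abs_mul, abs_neg, abs_of_nonneg (hp_nonneg u),
      abs_of_nonneg (show (0:ℝ) ≤ (σ ^ 2)⁻¹ * φσ (x - u) by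
        have := hφ_nonneg (x - u); positivity)]
    have hi := abs_real_inner_le_norm (x - u) w
    calc p u * ((σ ^ 2)⁻¹ * φσ (x - u) * |(inner ℝ (x - u) w : ℝ)|)
        ≤ p u * ((σ ^ 2)⁻¹ * φσ (x - u) * (‖x - u‖ * ‖w‖)) := by
          apply mul_le_mul_of_nonneg_left _ (hp_nonneg u)
          apply mul_le_mul_of_nonneg_left hi
          have := hφ_nonneg (x - u); positivity
      _ = ((σ ^ 2)⁻¹ * φσ (x - u) * ‖x - u‖) * (p u * ‖w‖) := by ring
      _ ≤ ((σ ^ 2)⁻¹ * K0 * (2 * σ)) * (p u * ‖w‖) := by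
          apply mul_le_mul_of_nonneg_right (hM _)
          have := hp_nonneg u; positivity
      _ = ((σ ^ 2)⁻¹ * K0 * (2 * σ) * p u) * ‖w‖ := by ring
  have hF'meas : ∀ x, AEStronglyMeasurable (F' x) volume := by
    intro x
    apply AEStronglyMeasurable.smul hp_meas.aestronglyMeasurable
    apply Continuous.aestronglyMeasurable
    apply Continuous.fun_smul
    · exact (continuous_const.mul (hφ_cont.comp (continuous_const.sub continuous_id))).neg
    · exact (innerSL ℝ).continuous.comp (continuous_const.sub continuous_id)
  -- integrability of F x for each x
  have hFint : ∀ x, Integrable (fun u => φσ (x - u) * p u) := by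
    intro x
    apply Integrable.bdd_mul hp_int
      ((hφ_cont.comp (continuous_const.sub continuous_id)).aestronglyMeasurable)
    refine (ae_of_all _ fun u => ?_ : ∀ᵐ u ∂volume, ‖φσ (x - u)‖ ≤ K0)
    show ‖φσ (x - u)‖ ≤ K0
    rw [Real.norm_eq_abs, abs_of_nonneg (hφ_nonneg _), hφσ]
    calc K0 * Real.exp (-‖x - u‖ ^ 2 / (2 * σ ^ 2)) ≤ K0 * 1 := by
          apply mul_le_mul_of_nonneg_left _ hK0pos.le
          apply Real.exp_le_one_iff.2
          rw [neg_div]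
          have : (0:ℝ) ≤ ‖x - u‖ ^ 2 / (2 * σ ^ 2) := by positivity
          linarith
      _ = K0 := mul_one _
  have hbound_int : Integrable (fun u => ((σ ^ 2)⁻¹ * K0 * (2 * σ)) * p u) :=
    hp_int.const_mul _
  have hFD : HasFDerivAt (fun x => ∫ u, φσ (x - u) * p u) (∫ u, F' x₀ u) x₀ := by
    apply hasFDerivAt_integral_of_dominated_of_fderiv_le (s := Metric.ball x₀ 1) (Metric.ball_mem_nhds x₀ one_pos)
    · filter_upwards with x
      exact ((hφ_cont.comp (continuous_const.sub continuous_id)).aestronglyMeasurable).mul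
        hp_meas.aestronglyMeasurable
    · exact hFint x₀
    · exact hF'meas x₀
    · filter_upwards with u x _
      exact hnormF' x u
    · exact hbound_int
    · filter_upwards with u x _
      exact hderiv u x
  -- convert to gradient
  rw [hasGradientAt_iff_hasFDerivAt]
  refine hFD.congr_fderiv (Eq.symm ?_)
  have := (InnerProductSpace.toDual ℝ (EuclideanSpace ℝ (Fin n))).toLinearIsometry.integral_comp_comm
    (fun u => (φσ (x₀ - u) * p u) • ((σ ^ 2)⁻¹ • (u - x₀))) (μ := volume)
  rw [LinearIsometryEquiv.coe_toLinearIsometry] at this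
  rw [← this]
  congr 1
  funext u
  ext w
  simp only [hF', _root_.map_smul, ContinuousLinearMap.smul_apply, smul_eq_mul,
    InnerProductSpace.toDual_apply_apply, innerSL_apply_apply, ContinuousLinearMap.neg_apply,
    inner_sub_left, LinearIsometryEquiv.coe_toLinearIsometry]
  ring

/-- **Explicit vs. denoising score matching.** For a probability density `p` on `ℝⁿ`,
noise level `σ > 0`, Gaussian kernel `φσ` and smoothed density `pσ = p ∗ N(0, σ²I)` with
score `∇ log pσ`, the explicit score matching objective equals the denoising score matching
objective plus a constant `C` independent of the candidate score field `s`. -/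
theorem explicit_eq_denoising_score_matching
    {n : ℕ} (σ : ℝ) (hσ : 0 < σ)
    (p : EuclideanSpace ℝ (Fin n) → ℝ) (hp_meas : Measurable p)
    (hp_nonneg : ∀ u, 0 ≤ p u) (hp_prob : ∫ u, p u = 1)
    (φσ : EuclideanSpace ℝ (Fin n) → ℝ)
    (hφσ : ∀ v, φσ v = (2 * π * σ ^ 2) ^ (-(n : ℝ) / 2) * Real.exp (-‖v‖ ^ 2 / (2 * σ ^ 2)))
    (pσ : EuclideanSpace ℝ (Fin n) → ℝ)
    (hpσ : ∀ x, pσ x = ∫ u, φσ (x - u) * p u)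
    (hpσ_pos : ∀ x, 0 < pσ x)
    (s : EuclideanSpace ℝ (Fin n) → EuclideanSpace ℝ (Fin n)) (hs_meas : Measurable s)
    (hs_int : Integrable
      (fun z : EuclideanSpace ℝ (Fin n) × EuclideanSpace ℝ (Fin n) =>
        ‖s z.2‖ ^ 2 * (φσ (z.2 - z.1) * p z.1)))
    (hscore_int : Integrable
      (fun x => ‖gradient (fun y => Real.log (pσ y)) x‖ ^ 2 * pσ x))
    (hcond_int : Integrable
      (fun z : EuclideanSpace ℝ (Fin n) × EuclideanSpace ℝ (Fin n) =>
        ‖(σ ^ 2)⁻¹ • (z.1 - z.2)‖ ^ 2 * (φσ (z.2 - z.1) * p z.1))) :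
    ∫ x, ‖s x - gradient (fun y => Real.log (pσ y)) x‖ ^ 2 * pσ x
      = (∫ z : EuclideanSpace ℝ (Fin n) × EuclideanSpace ℝ (Fin n),
            ‖s z.2 - (σ ^ 2)⁻¹ • (z.1 - z.2)‖ ^ 2 * (φσ (z.2 - z.1) * p z.1))
        + ((∫ x, ‖gradient (fun y => Real.log (pσ y)) x‖ ^ 2 * pσ x)
            - ∫ z : EuclideanSpace ℝ (Fin n) × EuclideanSpace ℝ (Fin n),
                ‖(σ ^ 2)⁻¹ • (z.1 - z.2)‖ ^ 2 * (φσ (z.2 - z.1) * p z.1)) := by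
  have hσ2 : (0:ℝ) < σ ^ 2 := by positivity
  have hp_int : Integrable p := by
    by_contra h
    rw [integral_undef h] at hp_prob
    norm_num at hp_prob
  set K0 : ℝ := (2 * π * σ ^ 2) ^ (-(n:ℝ)/2) with hK0
  have hK0pos : 0 < K0 := Real.rpow_pos_of_pos (by positivity) _
  have hφ_nonneg : ∀ v, 0 ≤ φσ v := fun v => by rw [hφσ]; positivity
  have hφ_cont : Continuous φσ := by
    have : φσ = fun v => K0 * Real.exp (-‖v‖ ^ 2 / (2 * σ ^ 2)) := funext hφσ
    rw [this]; fun_prop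
  have hM : ∀ v : EuclideanSpace ℝ (Fin n),
      (σ ^ 2)⁻¹ * φσ v * ‖v‖ ≤ (σ ^ 2)⁻¹ * K0 * (2 * σ) := by
    intro v
    have h1 : ‖v‖ * Real.exp (-‖v‖ ^ 2 / (2 * σ ^ 2)) ≤ 2 * σ :=
      aux_rexp_bound σ ‖v‖ hσ (norm_nonneg v)
    rw [hφσ v]
    have h2 : (σ ^ 2)⁻¹ * (K0 * Real.exp (-‖v‖ ^ 2 / (2 * σ ^ 2))) * ‖v‖
        = (σ ^ 2)⁻¹ * K0 * (‖v‖ * Real.exp (-‖v‖ ^ 2 / (2 * σ ^ 2))) := by ring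
    rw [h2]
    exact mul_le_mul_of_nonneg_left h1 (by positivity)
  -- notation
  set G : EuclideanSpace ℝ (Fin n) → EuclideanSpace ℝ (Fin n) :=
    fun x => ∫ u, (φσ (x - u) * p u) • ((σ ^ 2)⁻¹ • (u - x)) with hGdef
  have hGrad : ∀ x, HasGradientAt pσ (G x) x := by
    intro x
    have hpσ' : pσ = fun x => ∫ u, φσ (x - u) * p u := funext hpσ
    rw [hpσ', hGdef]
    exact aux_hasGradientAt hσ hp_meas hp_nonneg hp_int hφσ x
  have hlog_grad : ∀ x, gradient (fun y => Real.log (pσ y)) x = (pσ x)⁻¹ • G x := by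
    intro x
    have h1 : HasFDerivAt pσ (InnerProductSpace.toDual ℝ _ (G x)) x :=
      (hGrad x).hasFDerivAt
    have h2 := h1.log (ne_of_gt (hpσ_pos x))
    have h3 : HasGradientAt (fun y => Real.log (pσ y)) ((pσ x)⁻¹ • G x) x := by
      rw [hasGradientAt_iff_hasFDerivAt, _root_.map_smul]
      exact h2
    exact h3.gradient
  have hvec_int : ∀ x, Integrable (fun u => (φσ (x - u) * p u) • ((σ ^ 2)⁻¹ • (u - x))) := by
    intro x
    apply Integrable.mono' (hp_int.const_mul ((σ ^ 2)⁻¹ * K0 * (2 * σ)))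
    · apply AEStronglyMeasurable.fun_smul
      · exact ((hφ_cont.comp (continuous_const.sub continuous_id)).aestronglyMeasurable.mul
          hp_meas.aestronglyMeasurable)
      · exact (continuous_const.fun_smul (continuous_id.sub continuous_const)).aestronglyMeasurable
    · filter_upwards with u
      rw [norm_smul, norm_smul, Real.norm_eq_abs, Real.norm_eq_abs,
        abs_of_nonneg (mul_nonneg (hφ_nonneg _) (hp_nonneg u)),
        abs_of_nonneg (inv_nonneg.2 (sq_nonneg σ))]
      have h3 : φσ (x - u) * p u * ((σ ^ 2)⁻¹ * ‖u - x‖)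
          = ((σ ^ 2)⁻¹ * φσ (x - u) * ‖x - u‖) * p u := by
        rw [norm_sub_rev]; ring
      rw [h3]
      exact mul_le_mul_of_nonneg_right (hM _) (hp_nonneg u)
  -- pointwise cross identity
  have hcross : ∀ x, (inner ℝ (s x) (gradient (fun y => Real.log (pσ y)) x) : ℝ) * pσ x
      = ∫ u, (inner ℝ (s x) ((σ ^ 2)⁻¹ • (u - x)) : ℝ) * (φσ (x - u) * p u) := by
    intro x
    have hne : pσ x ≠ 0 := (hpσ_pos x).ne'
    rw [hlog_grad x, real_inner_smul_right]
    have h1 : (pσ x)⁻¹ * (inner ℝ (s x) (G x) : ℝ) * pσ x = inner ℝ (s x) (G x) := by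
      field_simp
    rw [h1]
    have h4 : (inner ℝ (s x) (G x) : ℝ)
        = ∫ u, (inner ℝ (s x) ((φσ (x - u) * p u) • ((σ ^ 2)⁻¹ • (u - x))) : ℝ) := by
      rw [hGdef]
      exact ((innerSL ℝ (s x)).integral_comp_comm (hvec_int x)).symm
    rw [h4]
    congr 1
    funext u
    rw [real_inner_smul_right]
    ring
  -- joint functions
  set I2 : EuclideanSpace ℝ (Fin n) × EuclideanSpace ℝ (Fin n) → ℝ :=
    fun z => (inner ℝ (s z.2) ((σ ^ 2)⁻¹ • (z.1 - z.2)) : ℝ) * (φσ (z.2 - z.1) * p z.1) with hI2def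
  have hw_nonneg : ∀ z : EuclideanSpace ℝ (Fin n) × EuclideanSpace ℝ (Fin n),
      0 ≤ φσ (z.2 - z.1) * p z.1 := fun z => mul_nonneg (hφ_nonneg _) (hp_nonneg _)
  have hw_meas : Measurable (fun z : EuclideanSpace ℝ (Fin n) × EuclideanSpace ℝ (Fin n) =>
      φσ (z.2 - z.1) * p z.1) :=
    ((hφ_cont.measurable.comp (measurable_snd.sub measurable_fst)).mul
      (hp_meas.comp measurable_fst))
  have hc_meas : Measurable (fun z : EuclideanSpace ℝ (Fin n) × EuclideanSpace ℝ (Fin n) =>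
      (σ ^ 2)⁻¹ • (z.1 - z.2)) := (measurable_fst.sub measurable_snd).const_smul ((σ ^ 2)⁻¹)
  have hI2_meas : Measurable I2 := by
    rw [hI2def]
    exact ((hs_meas.comp measurable_snd).inner hc_meas).mul hw_meas
  have hI2_int : Integrable I2 := by
    apply Integrable.mono'
      ((hs_int.const_mul ((1:ℝ)/2)).add (hcond_int.const_mul ((1:ℝ)/2)))
      hI2_meas.aestronglyMeasurable
    filter_upwards with z
    rw [hI2def]
    simp only []
    rw [Real.norm_eq_abs, abs_mul, abs_of_nonneg (hw_nonneg z)]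
    have h1 : |(inner ℝ (s z.2) ((σ ^ 2)⁻¹ • (z.1 - z.2)) : ℝ)|
        ≤ ‖s z.2‖ * ‖(σ ^ 2)⁻¹ • (z.1 - z.2)‖ := abs_real_inner_le_norm _ _
    have h2 : ‖s z.2‖ * ‖(σ ^ 2)⁻¹ • (z.1 - z.2)‖
        ≤ 1/2 * ‖s z.2‖ ^ 2 + 1/2 * ‖(σ ^ 2)⁻¹ • (z.1 - z.2)‖ ^ 2 := by
      nlinarith [sq_nonneg (‖s z.2‖ - ‖(σ ^ 2)⁻¹ • (z.1 - z.2)‖)]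
    have h3 := mul_le_mul_of_nonneg_right (h1.trans h2) (hw_nonneg z)
    calc |(inner ℝ (s z.2) ((σ ^ 2)⁻¹ • (z.1 - z.2)) : ℝ)| * (φσ (z.2 - z.1) * p z.1)
        ≤ (1/2 * ‖s z.2‖ ^ 2 + 1/2 * ‖(σ ^ 2)⁻¹ • (z.1 - z.2)‖ ^ 2)
            * (φσ (z.2 - z.1) * p z.1) := h3
      _ = 1/2 * (‖s z.2‖ ^ 2 * (φσ (z.2 - z.1) * p z.1))
            + 1/2 * (‖(σ ^ 2)⁻¹ • (z.1 - z.2)‖ ^ 2 * (φσ (z.2 - z.1) * p z.1)) := by ring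
  -- pσ marginal identity
  have hA : ∀ x, ‖s x‖ ^ 2 * pσ x = ∫ u, ‖s x‖ ^ 2 * (φσ (x - u) * p u) := by
    intro x
    rw [hpσ x, integral_const_mul]
  -- rewrite joint integrability over product measure
  rw [Measure.volume_eq_prod] at hs_int hcond_int hI2_int
  -- marginal integrability
  have hA_int : Integrable (fun x => ‖s x‖ ^ 2 * pσ x) := by
    apply hs_int.integral_prod_right.congr
    filter_upwards with x
    exact (hA x).symm
  have hB_int : Integrable (fun x => (inner ℝ (s x) (gradient (fun y => Real.log (pσ y)) x) : ℝ) * pσ x) := by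
    apply hI2_int.integral_prod_right.congr
    filter_upwards with x
    exact (hcross x).symm
  -- Fubini identities
  have hAF : ∫ x, ‖s x‖ ^ 2 * pσ x
      = ∫ z : EuclideanSpace ℝ (Fin n) × EuclideanSpace ℝ (Fin n),
          ‖s z.2‖ ^ 2 * (φσ (z.2 - z.1) * p z.1) := by
    rw [Measure.volume_eq_prod, integral_prod_symm _ hs_int]
    congr 1
    funext x
    exact hA x
  have hBF : ∫ x, (inner ℝ (s x) (gradient (fun y => Real.log (pσ y)) x) : ℝ) * pσ x
      = ∫ z : EuclideanSpace ℝ (Fin n) × EuclideanSpace ℝ (Fin n), I2 z := by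
    rw [Measure.volume_eq_prod, integral_prod_symm _ hI2_int]
    congr 1
    funext x
    exact hcross x
  -- integrability back over `volume` on the product space
  have hs_int' : Integrable
      (fun z : EuclideanSpace ℝ (Fin n) × EuclideanSpace ℝ (Fin n) =>
        ‖s z.2‖ ^ 2 * (φσ (z.2 - z.1) * p z.1)) := by
    rw [Measure.volume_eq_prod]; exact hs_int
  have hcond_int' : Integrable
      (fun z : EuclideanSpace ℝ (Fin n) × EuclideanSpace ℝ (Fin n) =>
        ‖(σ ^ 2)⁻¹ • (z.1 - z.2)‖ ^ 2 * (φσ (z.2 - z.1) * p z.1)) := by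
    rw [Measure.volume_eq_prod]; exact hcond_int
  have hI2_int' : Integrable I2 := by
    rw [Measure.volume_eq_prod]; exact hI2_int
  -- pointwise expansions
  have hexp : (fun x => ‖s x - gradient (fun y => Real.log (pσ y)) x‖ ^ 2 * pσ x)
      = fun x => (‖s x‖ ^ 2 * pσ x)
          - 2 * ((inner ℝ (s x) (gradient (fun y => Real.log (pσ y)) x) : ℝ) * pσ x)
          + (‖gradient (fun y => Real.log (pσ y)) x‖ ^ 2 * pσ x) := by
    funext x
    rw [norm_sub_sq_real]
    ring
  have hexp2 : (fun z : EuclideanSpace ℝ (Fin n) × EuclideanSpace ℝ (Fin n) =>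
        ‖s z.2 - (σ ^ 2)⁻¹ • (z.1 - z.2)‖ ^ 2 * (φσ (z.2 - z.1) * p z.1))
      = fun z => (‖s z.2‖ ^ 2 * (φσ (z.2 - z.1) * p z.1)) - 2 * I2 z
          + (‖(σ ^ 2)⁻¹ • (z.1 - z.2)‖ ^ 2 * (φσ (z.2 - z.1) * p z.1)) := by
    funext z
    rw [norm_sub_sq_real, hI2def]
    ring
  have hB2 : Integrable (fun x =>
      2 * ((inner ℝ (s x) (gradient (fun y => Real.log (pσ y)) x) : ℝ) * pσ x)) :=
    hB_int.const_mul 2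
  have hAB : Integrable (fun x => ‖s x‖ ^ 2 * pσ x
      - 2 * ((inner ℝ (s x) (gradient (fun y => Real.log (pσ y)) x) : ℝ) * pσ x)) :=
    hA_int.sub hB2
  have hI22 : Integrable (fun z : EuclideanSpace ℝ (Fin n) × EuclideanSpace ℝ (Fin n) =>
      2 * I2 z) := hI2_int'.const_mul 2
  have hI12 : Integrable (fun z : EuclideanSpace ℝ (Fin n) × EuclideanSpace ℝ (Fin n) =>
      ‖s z.2‖ ^ 2 * (φσ (z.2 - z.1) * p z.1) - 2 * I2 z) := hs_int'.sub hI22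
  rw [hexp, hexp2]
  rw [integral_add hAB hscore_int, integral_sub hA_int hB2, integral_const_mul]
  rw [integral_add hI12 hcond_int', integral_sub hs_int' hI22, integral_const_mul]
  rw [hAF, hBF]
  ring
end

section
/- Let p : ℝ^n → (0,∞) be a continuously differentiable, strictly positive probability density with ∫ ‖∇ log p(u)‖² p(u) du < ∞, and let s : ℝ^n → ℝ^n be continuously differentiable with compact support. Then ∫ (1/2)‖s(u) − ∇ log p(u)‖² p(u) du = ∫ ( (1/2)‖s(u)‖² + div s(u) ) p(u) du + ∫ (1/2)‖∇ log p(u)‖² p(u) du, where div s(u) = tr(Ds(u)) is the divergence (trace of the Jacobian) of s. -/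
open MeasureTheory Real

section Aux

variable {n : ℕ}

local notation "E" => EuclideanSpace ℝ (Fin n)

private lemma aux_trace_eq (T : E →ₗ[ℝ] E) :
    LinearMap.trace ℝ E T = ∑ i, T (EuclideanSpace.single i 1) i := by
  rw [LinearMap.trace_eq_matrix_trace ℝ ((EuclideanSpace.basisFun (Fin n) ℝ).toBasis)]
  simp [Matrix.trace, LinearMap.toMatrix_apply, Matrix.diag]

private lemma aux_fderiv_inner (f : E → ℝ) (u v : E) :
    fderiv ℝ f u v = inner ℝ (gradient f u) v := by
  rw [gradient, InnerProductSpace.toDual_symm_apply]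

end Aux

/-- **Score matching via integration by parts.** For a strictly positive `C¹` probability
density `p` on `ℝⁿ` with square-integrable score, and a compactly supported `C¹` vector
field `s`, the score matching objective `∫ ½‖s − ∇ log p‖² p` equals
`∫ (½‖s‖² + div s) p` plus the constant `∫ ½‖∇ log p‖² p`. -/
theorem score_matching_integration_by_parts
    {n : ℕ} (p : EuclideanSpace ℝ (Fin n) → ℝ)
    (hp_smooth : ContDiff ℝ 1 p) (hp_pos : ∀ u, 0 < p u)
    (hp_prob : ∫ u, p u = 1)
    (hscore_int : Integrable
      (fun u => ‖gradient (fun v => Real.log (p v)) u‖ ^ 2 * p u))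
    (s : EuclideanSpace ℝ (Fin n) → EuclideanSpace ℝ (Fin n))
    (hs_smooth : ContDiff ℝ 1 s) (hs_supp : HasCompactSupport s) :
    ∫ u, (1 / 2) * ‖s u - gradient (fun v => Real.log (p v)) u‖ ^ 2 * p u
      = (∫ u, ((1 / 2) * ‖s u‖ ^ 2
            + LinearMap.trace ℝ (EuclideanSpace ℝ (Fin n))
                (fderiv ℝ s u : EuclideanSpace ℝ (Fin n) →ₗ[ℝ] EuclideanSpace ℝ (Fin n)))
          * p u)
        + ∫ u, (1 / 2) * ‖gradient (fun v => Real.log (p v)) u‖ ^ 2 * p u := by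
  classical
  have hp_diff : Differentiable ℝ p := hp_smooth.differentiable one_ne_zero
  have hs_diff : Differentiable ℝ s := hs_smooth.differentiable one_ne_zero
  have hp_cont : Continuous p := hp_smooth.continuous
  have hs_cont : Continuous s := hs_smooth.continuous
  have hfds : Continuous (fderiv ℝ s) := hs_smooth.continuous_fderiv one_ne_zero
  have hfdp : Continuous (fderiv ℝ p) := hp_smooth.continuous_fderiv one_ne_zero
  have hgradp_cont : Continuous (fun u => gradient p u) :=
    (InnerProductSpace.toDual ℝ _).symm.continuous.comp hfdp
  -- the score
  have hglog : ∀ u, gradient (fun v => Real.log (p v)) u = (p u)⁻¹ • gradient p u := by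
    intro u
    have h : fderiv ℝ (fun v => Real.log (p v)) u = (p u)⁻¹ • fderiv ℝ p u :=
      fderiv.log (hp_diff u) (hp_pos u).ne'
    simp [gradient, h, _root_.map_smul]
  -- coordinate functions of `s`
  have hSdiff : ∀ i : Fin n, Differentiable ℝ (fun u => s u i) := fun i =>
    (EuclideanSpace.proj (𝕜 := ℝ) i).differentiable.comp hs_diff
  have hSfd : ∀ (i : Fin n) u, fderiv ℝ (fun w => s w i) u
      = (EuclideanSpace.proj (𝕜 := ℝ) i).comp (fderiv ℝ s u) := fun i u =>
    ((EuclideanSpace.proj (𝕜 := ℝ) i).hasFDerivAt.comp u (hs_diff u).hasFDerivAt).fderiv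
  -- compact supports
  have hsupp_fd : HasCompactSupport (fderiv ℝ s) := hs_supp.fderiv (𝕜 := ℝ)
  -- integrability of the various pieces
  have hA : Integrable (fun u => (1/2) * ‖s u‖^2 * p u) := by
    apply Continuous.integrable_of_hasCompactSupport
    · exact ((continuous_const.mul (hs_cont.norm.pow 2)).mul hp_cont)
    · apply HasCompactSupport.intro hs_supp
      intro x hx
      simp [image_eq_zero_of_notMem_tsupport hx]
  have hB : Integrable (fun u => (inner ℝ (s u) (gradient p u) : ℝ)) := by
    apply Continuous.integrable_of_hasCompactSupport
    · exact hs_cont.inner hgradp_cont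
    · apply HasCompactSupport.intro hs_supp
      intro x hx
      simp [image_eq_zero_of_notMem_tsupport hx]
  have hC : Integrable (fun u => (1/2) * ‖gradient (fun v => Real.log (p v)) u‖^2 * p u) := by
    have := hscore_int.const_mul (1/2)
    simpa [mul_assoc] using this
  have hTi : ∀ i : Fin n, Integrable (fun u => fderiv ℝ s u (EuclideanSpace.single i 1) i * p u) := by
    intro i
    apply Continuous.integrable_of_hasCompactSupport
    · exact ((EuclideanSpace.proj (𝕜 := ℝ) i).continuous.comp
        ((ContinuousLinearMap.apply ℝ _ (EuclideanSpace.single i (1:ℝ))).continuous.comp hfds)).mul hp_cont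
    · apply HasCompactSupport.intro hsupp_fd
      intro x hx
      simp [image_eq_zero_of_notMem_tsupport hx]
  have hT : Integrable (fun u => (∑ i, fderiv ℝ s u (EuclideanSpace.single i 1) i) * p u) := by
    have := integrable_finset_sum (μ := volume) Finset.univ (fun i _ => hTi i)
    simpa [Finset.sum_mul] using this
  -- integration by parts, coordinatewise
  have key : ∀ i : Fin n,
      ∫ u, s u i * fderiv ℝ p u (EuclideanSpace.single i 1)
        = - ∫ u, fderiv ℝ s u (EuclideanSpace.single i 1) i * p u := by
    intro i
    have h1 : Integrable (fun u => fderiv ℝ (fun w => s w i) u (EuclideanSpace.single i 1) * p u) := by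
      have := hTi i
      simp only [hSfd i]
      simpa using this
    have h2 : Integrable (fun u => s u i * fderiv ℝ p u (EuclideanSpace.single i 1)) := by
      apply Continuous.integrable_of_hasCompactSupport
      · exact ((EuclideanSpace.proj (𝕜 := ℝ) i).continuous.comp hs_cont).mul
          ((ContinuousLinearMap.apply ℝ ℝ (EuclideanSpace.single i (1:ℝ))).continuous.comp hfdp)
      · apply HasCompactSupport.intro hs_supp
        intro x hx
        simp [image_eq_zero_of_notMem_tsupport hx]
    have h3 : Integrable (fun u => s u i * p u) := by
      apply Continuous.integrable_of_hasCompactSupport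
      · exact ((EuclideanSpace.proj (𝕜 := ℝ) i).continuous.comp hs_cont).mul hp_cont
      · apply HasCompactSupport.intro hs_supp
        intro x hx
        simp [image_eq_zero_of_notMem_tsupport hx]
    have := integral_mul_fderiv_eq_neg_fderiv_mul_of_integrable h1 h2 h3 (fun x _ => hSdiff i x) (fun x _ => hp_diff x)
    rw [this]
    congr 1
    apply integral_congr_ae
    filter_upwards with u
    rw [hSfd i]
    rfl
  -- main identity: ∫ ⟪s, ∇p⟫ = - ∫ (div s) p
  have hBT : ∫ u, (inner ℝ (s u) (gradient p u) : ℝ)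
      = - ∫ u, (∑ i, fderiv ℝ s u (EuclideanSpace.single i 1) i) * p u := by
    have hpt : ∀ u, (inner ℝ (s u) (gradient p u) : ℝ)
        = ∑ i, s u i * fderiv ℝ p u (EuclideanSpace.single i 1) := by
      intro u
      rw [PiLp.inner_apply]
      refine Finset.sum_congr rfl fun i _ => ?_
      rw [aux_fderiv_inner]
      simp [EuclideanSpace.inner_single_right, real_inner_comm, mul_comm]
      left
      rw [aux_fderiv_inner, EuclideanSpace.inner_single_right]
      simp
    calc ∫ u, (inner ℝ (s u) (gradient p u) : ℝ)
        = ∫ u, ∑ i, s u i * fderiv ℝ p u (EuclideanSpace.single i 1) := by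
          exact integral_congr_ae (Filter.Eventually.of_forall hpt)
      _ = ∑ i, ∫ u, s u i * fderiv ℝ p u (EuclideanSpace.single i 1) := by
          apply integral_finset_sum
          intro i _
          apply Continuous.integrable_of_hasCompactSupport
          · exact ((EuclideanSpace.proj (𝕜 := ℝ) i).continuous.comp hs_cont).mul
              ((ContinuousLinearMap.apply ℝ ℝ (EuclideanSpace.single i (1:ℝ))).continuous.comp hfdp)
          · apply HasCompactSupport.intro hs_supp
            intro x hx
            simp [image_eq_zero_of_notMem_tsupport hx]
      _ = ∑ i, - ∫ u, fderiv ℝ s u (EuclideanSpace.single i 1) i * p u := by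
          exact Finset.sum_congr rfl fun i _ => key i
      _ = - ∑ i, ∫ u, fderiv ℝ s u (EuclideanSpace.single i 1) i * p u := by
          rw [Finset.sum_neg_distrib]
      _ = - ∫ u, (∑ i, fderiv ℝ s u (EuclideanSpace.single i 1) i) * p u := by
          congr 1
          rw [← integral_finset_sum Finset.univ (fun i _ => hTi i)]
          exact integral_congr_ae (Filter.Eventually.of_forall fun u =>
            (Finset.sum_mul _ _ _).symm)
  -- pointwise decomposition of the left-hand side
  have hLHSpt : ∀ u, (1 / 2) * ‖s u - gradient (fun v => Real.log (p v)) u‖ ^ 2 * p u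
      = (1/2) * ‖s u‖^2 * p u - (inner ℝ (s u) (gradient p u) : ℝ)
        + (1/2) * ‖gradient (fun v => Real.log (p v)) u‖^2 * p u := by
    intro u
    have hns : ‖s u - gradient (fun v => Real.log (p v)) u‖ ^ 2
        = ‖s u‖^2 - 2 * inner ℝ (s u) (gradient (fun v => Real.log (p v)) u) +
          ‖gradient (fun v => Real.log (p v)) u‖^2 :=
      norm_sub_sq_real _ _
    have hinner : (inner ℝ (s u) (gradient (fun v => Real.log (p v)) u) : ℝ) * p u
        = (inner ℝ (s u) (gradient p u) : ℝ) := by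
      rw [hglog u, real_inner_smul_right, mul_comm, ← mul_assoc,
        mul_inv_cancel₀ (hp_pos u).ne', one_mul]
    rw [hns, ← hinner]
    ring
  -- pointwise decomposition of the right-hand side integrand
  have hRHSpt : ∀ u, ((1 / 2) * ‖s u‖ ^ 2
        + LinearMap.trace ℝ (EuclideanSpace ℝ (Fin n))
            (fderiv ℝ s u : EuclideanSpace ℝ (Fin n) →ₗ[ℝ] EuclideanSpace ℝ (Fin n))) * p u
      = (1/2) * ‖s u‖^2 * p u + (∑ i, fderiv ℝ s u (EuclideanSpace.single i 1) i) * p u := by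
    intro u
    rw [aux_trace_eq, add_mul]
    rfl
  rw [integral_congr_ae (Filter.Eventually.of_forall hLHSpt),
    integral_congr_ae (Filter.Eventually.of_forall hRHSpt)]
  have hAB : Integrable (fun u => (1/2) * ‖s u‖^2 * p u
      - (inner ℝ (s u) (gradient p u) : ℝ)) := hA.sub hB
  have hAT : Integrable (fun u => (1/2) * ‖s u‖^2 * p u
      + (∑ i, fderiv ℝ s u (EuclideanSpace.single i 1) i) * p u) := hA.add hT
  rw [integral_add hAB hC, integral_sub hA hB, integral_add hA hT, hBT]
  ring
end

section
/- Let μ be a σ-finite measure on a measurable space Ω, let p, q : Ω → [0,∞) be probability densities with respect to μ, and set P = μ.withDensity p, Q = μ.withDensity q, and M = (1/2)(P + Q). Then for every measurable D : Ω → (0,1), ∫ log(D) p dμ + ∫ log(1 − D) q dμ ≤ KL(P ‖ M) + KL(Q ‖ M) − log 4 (inequality in the extended reals), and equality is attained for the discriminator D*(u) = p(u)/(p(u)+q(u)) (defined arbitrarily where p(u)+q(u) = 0). In particular, the supremum of the GAN discriminator objective over all discriminators equals 2·JSD(P, Q) − log 4, where JSD(P,Q) = (1/2)KL(P‖M) +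 (1/2)KL(Q‖M) is the Jensen–Shannon divergence. -/
open MeasureTheory Real
open scoped ENNReal

private lemma gan_aux_nonneg (a b : ℝ) (ha : 0 ≤ a) (hb : 0 ≤ b) :
    0 ≤ -Real.log (a / (a + b)) := by
  have h1 : a / (a + b) ≤ 1 := div_le_one_of_le₀ (by linarith) (by linarith)
  have h2 : 0 ≤ a / (a + b) := div_nonneg ha (by linarith)
  have := Real.log_nonpos h2 h1
  linarith

private lemma gan_aux_le (a b : ℝ) (ha : 0 ≤ a) (hb : 0 ≤ b) :
    -Real.log (a / (a + b)) * a ≤ b := by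
  rcases eq_or_lt_of_le ha with h | h
  · rw [← h]; simpa using hb
  · have hab : 0 < a + b := by linarith
    have h1 : -Real.log (a / (a + b)) = Real.log ((a + b) / a) := by
      rw [← Real.log_inv]
      congr 1
      rw [inv_div]
    have h2 := Real.log_le_sub_one_of_pos (show (0:ℝ) < (a + b) / a by positivity)
    have h3 : (a + b) / a - 1 = b / a := by field_simp; ring
    rw [h1]
    calc Real.log ((a + b) / a) * a ≤ (b / a) * a := by
          apply mul_le_mul_of_nonneg_right _ ha
          linarith
      _ = b := by field_simp

private lemma gan_key1 (a b c : ℝ) (ha : 0 ≤ a) (hb : 0 ≤ b) (hc : 0 < c) :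
    Real.log c * a ≤ Real.log (a / (a + b)) * a + (c * (a + b) - a) := by
  rcases eq_or_lt_of_le ha with h | h
  · rw [← h]
    simp
    positivity
  · have hab : 0 < a + b := by linarith
    have hx : (0:ℝ) < c * (a + b) / a := by positivity
    have hlog := Real.log_le_sub_one_of_pos hx
    have hsplit : Real.log (c * (a + b) / a) = Real.log c - Real.log (a / (a + b)) := by
      rw [Real.log_div (by positivity : (0:ℝ) < c * (a + b)).ne' h.ne',
        Real.log_mul hc.ne' hab.ne', Real.log_div h.ne' hab.ne']
      ring
    rw [hsplit] at hlog
    have hmul := mul_le_mul_of_nonneg_right hlog ha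
    have h4 : (c * (a + b) / a - 1) * a = c * (a + b) - a := by field_simp
    rw [h4] at hmul
    nlinarith [hmul]

private lemma gan_key (a b d : ℝ) (ha : 0 ≤ a) (hb : 0 ≤ b) (hd : 0 < d) (hd1 : d < 1) :
    -Real.log (a / (a + b)) * a + -Real.log (b / (a + b)) * b
      ≤ -Real.log d * a + -Real.log (1 - d) * b := by
  have H1 := gan_key1 a b d ha hb hd
  have H2 := gan_key1 b a (1 - d) hb ha (by linarith)
  rw [add_comm b a] at H2
  have h0 : d * (a + b) - a + ((1 - d) * (a + b) - b) = 0 := by ring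
  nlinarith [H1, H2]

private lemma gan_int_of_lintegral_ne_top {Ω : Type*} [MeasurableSpace Ω] {μ : Measure Ω}
    {h : Ω → ℝ} (hm : Measurable h) (hnn : ∀ u, 0 ≤ h u)
    (hfin : (∫⁻ u, ENNReal.ofReal (h u) ∂μ) ≠ ⊤) :
    Integrable h μ ∧ (∫⁻ u, ENNReal.ofReal (h u) ∂μ) = ENNReal.ofReal (∫ u, h u ∂μ) := by
  have hint : Integrable h μ := by
    refine ⟨hm.aestronglyMeasurable, ?_⟩
    rw [hasFiniteIntegral_iff_ofReal (Filter.Eventually.of_forall hnn)]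
    exact lt_top_iff_ne_top.2 hfin
  exact ⟨hint, (ofReal_integral_eq_lintegral_ofReal hint (Filter.Eventually.of_forall hnn)).symm⟩

/-- **Optimal GAN discriminator and Jensen–Shannon divergence.** Let `P = p·μ`,
`Q = q·μ` be probability measures and `M = ½(P+Q)`, with
`KL(P‖M) = ∫ log(2p/(p+q)) dP` and `KL(Q‖M) = ∫ log(2q/(p+q)) dQ`. For every measurable
discriminator `D : Ω → (0,1)`,
`∫ log D dP + ∫ log(1−D) dQ ≤ KL(P‖M) + KL(Q‖M) − log 4` in the extended reals (the
nonpositive integrals on the left are encoded as `−∫⁻ (−log D) dP` etc.), and equality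
holds for `D* = p/(p+q)`. -/
theorem gan_discriminator_objective_eq_jsd
    {Ω : Type*} [MeasurableSpace Ω] (μ : Measure Ω) [SigmaFinite μ]
    (p q : Ω → ℝ) (hp_meas : Measurable p) (hp_nonneg : ∀ u, 0 ≤ p u)
    (hq_meas : Measurable q) (hq_nonneg : ∀ u, 0 ≤ q u)
    (P Q : Measure Ω)
    (hP : P = μ.withDensity (fun u => ENNReal.ofReal (p u)))
    (hQ : Q = μ.withDensity (fun u => ENNReal.ofReal (q u)))
    (hPprob : IsProbabilityMeasure P) (hQprob : IsProbabilityMeasure Q)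
    (kl1 kl2 : ℝ)
    (hkl1 : kl1 = ∫ u, Real.log (2 * p u / (p u + q u)) * p u ∂μ)
    (hkl2 : kl2 = ∫ u, Real.log (2 * q u / (p u + q u)) * q u ∂μ) :
    (∀ D : Ω → ℝ, Measurable D → (∀ u, D u ∈ Set.Ioo (0 : ℝ) 1) →
      (-((∫⁻ u, ENNReal.ofReal (-Real.log (D u)) ∂P : ℝ≥0∞) : EReal))
          + (-((∫⁻ u, ENNReal.ofReal (-Real.log (1 - D u)) ∂Q : ℝ≥0∞) : EReal))
        ≤ ((kl1 + kl2 - Real.log 4 : ℝ) : EReal)) ∧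
    ((-((∫⁻ u, ENNReal.ofReal (-Real.log (p u / (p u + q u))) ∂P : ℝ≥0∞) : EReal))
          + (-((∫⁻ u, ENNReal.ofReal (-Real.log (q u / (p u + q u))) ∂Q : ℝ≥0∞) : EReal))
        = ((kl1 + kl2 - Real.log 4 : ℝ) : EReal)) := by
  -- conversion of lintegrals over P, Q to lintegrals over μ
  have hconvP : ∀ (h : Ω → ℝ), Measurable h →
      (∫⁻ u, ENNReal.ofReal (h u) ∂P) = ∫⁻ u, ENNReal.ofReal (h u * p u) ∂μ := by
    intro h hm
    rw [hP, lintegral_withDensity_eq_lintegral_mul μ hp_meas.ennreal_ofReal hm.ennreal_ofReal]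
    congr 1
    funext u
    simp only [Pi.mul_apply]
    rw [← ENNReal.ofReal_mul (hp_nonneg u), mul_comm]
  have hconvQ : ∀ (h : Ω → ℝ), Measurable h →
      (∫⁻ u, ENNReal.ofReal (h u) ∂Q) = ∫⁻ u, ENNReal.ofReal (h u * q u) ∂μ := by
    intro h hm
    rw [hQ, lintegral_withDensity_eq_lintegral_mul μ hq_meas.ennreal_ofReal hm.ennreal_ofReal]
    congr 1
    funext u
    simp only [Pi.mul_apply]
    rw [← ENNReal.ofReal_mul (hq_nonneg u), mul_comm]
  -- total masses
  have hPuniv : (∫⁻ u, ENNReal.ofReal (p u) ∂μ) = 1 := by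
    have h := hPprob.measure_univ
    rwa [hP, withDensity_apply _ MeasurableSet.univ, setLIntegral_univ] at h
  have hQuniv : (∫⁻ u, ENNReal.ofReal (q u) ∂μ) = 1 := by
    have h := hQprob.measure_univ
    rwa [hQ, withDensity_apply _ MeasurableSet.univ, setLIntegral_univ] at h
  have hp_int : Integrable p μ := by
    refine ⟨hp_meas.aestronglyMeasurable, ?_⟩
    rw [hasFiniteIntegral_iff_ofReal (Filter.Eventually.of_forall hp_nonneg), hPuniv]
    exact ENNReal.one_lt_top
  have hq_int : Integrable q μ := by
    refine ⟨hq_meas.aestronglyMeasurable, ?_⟩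
    rw [hasFiniteIntegral_iff_ofReal (Filter.Eventually.of_forall hq_nonneg), hQuniv]
    exact ENNReal.one_lt_top
  have hp_integral : ∫ u, p u ∂μ = 1 := by
    rw [integral_eq_lintegral_of_nonneg_ae (Filter.Eventually.of_forall hp_nonneg)
      hp_meas.aestronglyMeasurable, hPuniv, ENNReal.toReal_one]
  have hq_integral : ∫ u, q u ∂μ = 1 := by
    rw [integral_eq_lintegral_of_nonneg_ae (Filter.Eventually.of_forall hq_nonneg)
      hq_meas.aestronglyMeasurable, hQuniv, ENNReal.toReal_one]
  -- the optimal discriminator payoff densities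
  have hpq_meas : Measurable (fun u => p u + q u) := hp_meas.add hq_meas
  have hrp_meas : Measurable (fun u => -Real.log (p u / (p u + q u)) * p u) :=
    ((hp_meas.div hpq_meas).log.neg).mul hp_meas
  have hsq_meas : Measurable (fun u => -Real.log (q u / (p u + q u)) * q u) :=
    ((hq_meas.div hpq_meas).log.neg).mul hq_meas
  have hrp_nonneg : ∀ u, 0 ≤ -Real.log (p u / (p u + q u)) * p u := fun u =>
    mul_nonneg (gan_aux_nonneg _ _ (hp_nonneg u) (hq_nonneg u)) (hp_nonneg u)
  have hsq_nonneg : ∀ u, 0 ≤ -Real.log (q u / (p u + q u)) * q u := fun u => by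
    have := mul_nonneg (gan_aux_nonneg (q u) (p u) (hq_nonneg u) (hp_nonneg u)) (hq_nonneg u)
    rwa [add_comm] at this
  have hrp_le : ∀ u, -Real.log (p u / (p u + q u)) * p u ≤ q u := fun u =>
    gan_aux_le _ _ (hp_nonneg u) (hq_nonneg u)
  have hsq_le : ∀ u, -Real.log (q u / (p u + q u)) * q u ≤ p u := fun u => by
    have := gan_aux_le (q u) (p u) (hq_nonneg u) (hp_nonneg u)
    rwa [add_comm (q u) (p u)] at this
  have hrp_int : Integrable (fun u => -Real.log (p u / (p u + q u)) * p u) μ :=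
    hq_int.mono' hrp_meas.aestronglyMeasurable (Filter.Eventually.of_forall fun u => by
      rw [Real.norm_of_nonneg (hrp_nonneg u)]; exact hrp_le u)
  have hsq_int : Integrable (fun u => -Real.log (q u / (p u + q u)) * q u) μ :=
    hp_int.mono' hsq_meas.aestronglyMeasurable (Filter.Eventually.of_forall fun u => by
      rw [Real.norm_of_nonneg (hsq_nonneg u)]; exact hsq_le u)
  set a : ℝ := ∫ u, -Real.log (p u / (p u + q u)) * p u ∂μ with ha_def
  set b : ℝ := ∫ u, -Real.log (q u / (p u + q u)) * q u ∂μ with hb_def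
  have ha_nn : 0 ≤ a := integral_nonneg hrp_nonneg
  have hb_nn : 0 ≤ b := integral_nonneg hsq_nonneg
  -- the value of kl1 + kl2 - log 4
  have hkl1' : kl1 = Real.log 2 - a := by
    have hfun : ∀ u, Real.log (2 * p u / (p u + q u)) * p u
        = Real.log 2 * p u - -Real.log (p u / (p u + q u)) * p u := by
      intro u
      rcases eq_or_lt_of_le (hp_nonneg u) with h | h
      · rw [← h]; ring
      · have hab : 0 < p u + q u := by have := hq_nonneg u; linarith
        have hlog : Real.log (2 * p u / (p u + q u))
            = Real.log 2 + Real.log (p u / (p u + q u)) := by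
          rw [mul_div_assoc,
            Real.log_mul two_ne_zero (by positivity : (0:ℝ) < p u / (p u + q u)).ne']
        rw [hlog]; ring
    rw [hkl1]
    calc (∫ u, Real.log (2 * p u / (p u + q u)) * p u ∂μ)
        = ∫ u, (Real.log 2 * p u - -Real.log (p u / (p u + q u)) * p u) ∂μ := by
          exact integral_congr_ae (Filter.Eventually.of_forall hfun)
      _ = (∫ u, Real.log 2 * p u ∂μ) - a := by
          rw [integral_sub (hp_int.const_mul _) hrp_int]
      _ = Real.log 2 - a := by
          rw [integral_const_mul, hp_integral, mul_one]
  have hkl2' : kl2 = Real.log 2 - b := by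
    have hfun : ∀ u, Real.log (2 * q u / (p u + q u)) * q u
        = Real.log 2 * q u - -Real.log (q u / (p u + q u)) * q u := by
      intro u
      rcases eq_or_lt_of_le (hq_nonneg u) with h | h
      · rw [← h]; ring
      · have hab : 0 < p u + q u := by have := hp_nonneg u; linarith
        have hlog : Real.log (2 * q u / (p u + q u))
            = Real.log 2 + Real.log (q u / (p u + q u)) := by
          rw [mul_div_assoc,
            Real.log_mul two_ne_zero (by positivity : (0:ℝ) < q u / (p u + q u)).ne']
        rw [hlog]; ring
    rw [hkl2]
    calc (∫ u, Real.log (2 * q u / (p u + q u)) * q u ∂μ)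
        = ∫ u, (Real.log 2 * q u - -Real.log (q u / (p u + q u)) * q u) ∂μ := by
          exact integral_congr_ae (Filter.Eventually.of_forall hfun)
      _ = (∫ u, Real.log 2 * q u ∂μ) - b := by
          rw [integral_sub (hq_int.const_mul _) hsq_int]
      _ = Real.log 2 - b := by
          rw [integral_const_mul, hq_integral, mul_one]
  have hlog4 : Real.log 4 = 2 * Real.log 2 := by
    rw [show (4:ℝ) = 2 ^ 2 by norm_num, Real.log_pow]
    push_cast; ring
  have hR : kl1 + kl2 - Real.log 4 = -a - b := by
    rw [hkl1', hkl2', hlog4]; ring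
  -- lintegrals of the optimal payoff over μ
  have hArp : (∫⁻ u, ENNReal.ofReal (-Real.log (p u / (p u + q u)) * p u) ∂μ)
      = ENNReal.ofReal a := by
    have hfin : (∫⁻ u, ENNReal.ofReal (-Real.log (p u / (p u + q u)) * p u) ∂μ) ≠ ⊤ := by
      refine ne_top_of_le_ne_top (by rw [hQuniv]; exact ENNReal.one_ne_top)
        (lintegral_mono fun u => ENNReal.ofReal_le_ofReal (hrp_le u))
    exact (gan_int_of_lintegral_ne_top hrp_meas hrp_nonneg hfin).2
  have hBsq : (∫⁻ u, ENNReal.ofReal (-Real.log (q u / (p u + q u)) * q u) ∂μ)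
      = ENNReal.ofReal b := by
    have hfin : (∫⁻ u, ENNReal.ofReal (-Real.log (q u / (p u + q u)) * q u) ∂μ) ≠ ⊤ := by
      refine ne_top_of_le_ne_top (by rw [hPuniv]; exact ENNReal.one_ne_top)
        (lintegral_mono fun u => ENNReal.ofReal_le_ofReal (hsq_le u))
    exact (gan_int_of_lintegral_ne_top hsq_meas hsq_nonneg hfin).2
  constructor
  · -- the inequality for an arbitrary discriminator
    intro D hD_meas hD_mem
    have hD_pos : ∀ u, 0 < D u := fun u => (hD_mem u).1
    have hD_lt : ∀ u, D u < 1 := fun u => (hD_mem u).2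
    have hlDp_meas : Measurable (fun u => -Real.log (D u) * p u) :=
      (hD_meas.log.neg).mul hp_meas
    have hlDq_meas : Measurable (fun u => -Real.log (1 - D u) * q u) :=
      ((measurable_const.sub hD_meas).log.neg).mul hq_meas
    have hlDp_nonneg : ∀ u, 0 ≤ -Real.log (D u) * p u := fun u =>
      mul_nonneg (by have := Real.log_nonpos (hD_pos u).le (hD_lt u).le; linarith)
        (hp_nonneg u)
    have hlDq_nonneg : ∀ u, 0 ≤ -Real.log (1 - D u) * q u := fun u =>
      mul_nonneg (by
        have := Real.log_nonpos (by have := hD_lt u; linarith : (0:ℝ) ≤ 1 - D u)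
          (by have := hD_pos u; linarith); linarith) (hq_nonneg u)
    rw [hconvP (fun u => -Real.log (D u)) hD_meas.log.neg,
      hconvQ (fun u => -Real.log (1 - D u)) (measurable_const.sub hD_meas).log.neg]
    by_cases hA : (∫⁻ u, ENNReal.ofReal (-Real.log (D u) * p u) ∂μ) = ⊤
    · rw [hA, EReal.coe_ennreal_top, EReal.neg_top, EReal.bot_add]
      exact bot_le
    by_cases hB : (∫⁻ u, ENNReal.ofReal (-Real.log (1 - D u) * q u) ∂μ) = ⊤
    · rw [hB, EReal.coe_ennreal_top, EReal.neg_top, EReal.add_bot]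
      exact bot_le
    obtain ⟨hlDp_int, hAeq⟩ := gan_int_of_lintegral_ne_top hlDp_meas hlDp_nonneg hA
    obtain ⟨hlDq_int, hBeq⟩ := gan_int_of_lintegral_ne_top hlDq_meas hlDq_nonneg hB
    rw [hAeq, hBeq, EReal.coe_ennreal_ofReal, EReal.coe_ennreal_ofReal,
      max_eq_left (integral_nonneg hlDp_nonneg), max_eq_left (integral_nonneg hlDq_nonneg),
      ← EReal.coe_neg, ← EReal.coe_neg, ← EReal.coe_add, EReal.coe_le_coe_iff, hR]
    have hmono : a + b ≤ (∫ u, -Real.log (D u) * p u ∂μ) + ∫ u, -Real.log (1 - D u) * q u ∂μ := by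
      rw [ha_def, hb_def, ← integral_add hrp_int hsq_int, ← integral_add hlDp_int hlDq_int]
      refine integral_mono (hrp_int.add hsq_int) (hlDp_int.add hlDq_int) fun u => ?_
      exact gan_key (p u) (q u) (D u) (hp_nonneg u) (hq_nonneg u) (hD_pos u) (hD_lt u)
    linarith
  · -- equality for the optimal discriminator
    rw [hconvP (fun u => -Real.log (p u / (p u + q u))) (hp_meas.div hpq_meas).log.neg,
      hconvQ (fun u => -Real.log (q u / (p u + q u))) (hq_meas.div hpq_meas).log.neg,
      hArp, hBsq, EReal.coe_ennreal_ofReal, EReal.coe_ennreal_ofReal,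
      max_eq_left ha_nn, max_eq_left hb_nn,
      ← EReal.coe_neg, ← EReal.coe_neg, ← EReal.coe_add, EReal.coe_eq_coe_iff, hR]
    ring
end

section
/- Let H be a real inner product space and let D : H → H satisfy D(0) = 0 and be demicontractive with constant κ ∈ [0,1), meaning that for every u ∈ H and every fixed point u* of D (i.e., D(u*) = u*), one has ‖D(u) − u*‖² ≤ ‖u − u*‖² + κ‖u − D(u)‖². Then for every u ∈ H: ⟨u, u − D(u)⟩ = 0 if and only if D(u) = u. That is, the fixed points of the denoiser D coincide exactly with the roots of the regularization-by-denoising functional R(u) = ⟨u, u − D(u)⟩. -/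
open scoped RealInnerProductSpace

/-- **RED fixed points = roots of the RED functional.** Let `H` be a real inner product
space and `D : H → H` with `D 0 = 0` be demicontractive with constant `κ ∈ [0,1)`. Then
for every `u`, `⟪u, u − D u⟫ = 0` iff `D u = u`. -/
theorem red_fixedPoints_eq_roots
    {H : Type*} [NormedAddCommGroup H] [InnerProductSpace ℝ H]
    (D : H → H) (hD0 : D 0 = 0)
    (κ : ℝ) (hκ0 : 0 ≤ κ) (hκ1 : κ < 1)
    (hdemi : ∀ u ustar : H, D ustar = ustar →
      ‖D u - ustar‖ ^ 2 ≤ ‖u - ustar‖ ^ 2 + κ * ‖u - D u‖ ^ 2) :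
    ∀ u : H, ⟪u, u - D u⟫ = 0 ↔ D u = u := by
  intro u
  constructor
  · intro h
    have hd := hdemi u 0 hD0
    simp only [sub_zero] at hd
    have hpol : ‖D u‖ ^ 2 = ‖u‖ ^ 2 - 2 * ⟪u, u - D u⟫ + ‖u - D u‖ ^ 2 := by
      have := @norm_sub_sq_real H _ _ u (u - D u)
      simpa using this
    rw [hpol, h] at hd
    have hle : ‖u - D u‖ ^ 2 ≤ κ * ‖u - D u‖ ^ 2 := by linarith
    have : ‖u - D u‖ ^ 2 = 0 := by nlinarith [sq_nonneg ‖u - D u‖]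
    have : u - D u = 0 := by
      have := pow_eq_zero_iff (n := 2) (by norm_num) |>.mp this
      simpa [norm_eq_zero] using this
    have := sub_eq_zero.mp this
    exact this.symm
  · intro h
    rw [h]
    simp
end

section
/- Let D : ℝ^n → ℝ^n be continuously differentiable and assume: (i) for every u ∈ ℝ^n, the Jacobian D'(u) ∈ ℝ^{n×n} is a symmetric matrix; (ii) for every u ∈ ℝ^n, D'(u)·u = D(u) (the Euler identity implied by local homogeneity). Define ρ : ℝ^n → ℝ by ρ(u) = (1/2)⟨u, u − D(u)⟩. Then ρ is differentiable and ∇ρ(u) = u − D(u) for every u ∈ ℝ^n. -/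
open scoped RealInnerProductSpace

/-- **Gradient identity for regularization by denoising (RED).** If `D : ℝⁿ → ℝⁿ` is `C¹`
with symmetric Jacobian satisfying the Euler identity `D'(u)u = D(u)`, then
`ρ(u) = ½⟪u, u − D u⟫` is differentiable with gradient `∇ρ(u) = u − D u`. -/
theorem red_gradient_identity
    {n : ℕ} (D : EuclideanSpace ℝ (Fin n) → EuclideanSpace ℝ (Fin n))
    (hD : ContDiff ℝ 1 D)
    (hsym : ∀ u v w : EuclideanSpace ℝ (Fin n), ⟪fderiv ℝ D u v, w⟫ = ⟪fderiv ℝ D u w, v⟫)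
    (heuler : ∀ u : EuclideanSpace ℝ (Fin n), fderiv ℝ D u u = D u) :
    ∀ u : EuclideanSpace ℝ (Fin n),
      HasGradientAt (fun v => (1 / 2 : ℝ) * ⟪v, v - D v⟫) (u - D u) u := by
  intro u
  have hDf : HasFDerivAt D (fderiv ℝ D u) u :=
    (hD.differentiable one_ne_zero u).hasFDerivAt
  have h1 : HasFDerivAt (fun v : EuclideanSpace ℝ (Fin n) => v - D v)
      (ContinuousLinearMap.id ℝ _ - fderiv ℝ D u) u := (hasFDerivAt_id u).sub hDf
  have h2 := ((hasFDerivAt_id u).inner ℝ h1).const_mul (1 / 2 : ℝ)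
  rw [hasGradientAt_iff_hasFDerivAt]
  convert h2 using 1
  case e'_9 => rfl
  case e'_11 => rfl
  apply ContinuousLinearMap.ext
  intro h
  simp only [ContinuousLinearMap.smul_apply, ContinuousLinearMap.comp_apply,
    ContinuousLinearMap.prod_apply, fderivInnerCLM_apply, ContinuousLinearMap.id_apply,
    ContinuousLinearMap.sub_apply, InnerProductSpace.toDual_apply_apply, smul_eq_mul]
  have e1 : ⟪u, fderiv ℝ D u h⟫ = ⟪D u, h⟫ := by
    rw [real_inner_comm, hsym u h u, heuler u]
  simp only [id_eq]
  have e2 : ⟪u, h - fderiv ℝ D u h⟫ = ⟪u, h⟫ - ⟪D u, h⟫ := by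
    rw [inner_sub_right, e1]
  have e3 : ⟪h, u - D u⟫ = ⟪u, h⟫ - ⟪D u, h⟫ := by
    rw [inner_sub_right, real_inner_comm h u, real_inner_comm h (D u)]
  rw [e2, e3, inner_sub_left]
  ring
end

section
/- Let A : ℝ^n → ℝ^m be linear, let S ⊆ ℝ^n, and suppose A satisfies the set-restricted eigenvalue condition S-REC(S, γ, δ) with γ > 0 and δ ≥ 0: for all x₁, x₂ ∈ S, ‖A(x₁ − x₂)‖ ≥ γ‖x₁ − x₂‖ − δ. Let x* ∈ ℝ^n, ζ ∈ ℝ^m, y = A x* + ζ, and ε ≥ 0, and suppose x̂ ∈ S satisfies ‖A x̂ − y‖ ≤ ‖A x − y‖ + ε for all x ∈ S. Then for every x ∈ S, ‖x̂ − x‖ ≤ (2‖A(x − x*)‖ + 2‖ζ‖ + ε + δ) / γ. In particular, if x* ∈ S, then ‖x̂ − x*‖ ≤ (2‖ζ‖ + ε + δ)/γ. -/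
/-- **Recovery under the set-restricted eigenvalue condition (S-REC).** Suppose the linear
map `A` satisfies S-REC(S, γ, δ), `y = A x* + ζ`, and `x̂ ∈ S` minimizes the misfit over
`S` up to additive `ε`. Then `‖x̂ − x‖ ≤ (2‖A(x − x*)‖ + 2‖ζ‖ + ε + δ)/γ` for every
`x ∈ S`; in particular if `x* ∈ S` then `‖x̂ − x*‖ ≤ (2‖ζ‖ + ε + δ)/γ`. -/
theorem srec_recovery
    {n m : ℕ} (A : EuclideanSpace ℝ (Fin n) →ₗ[ℝ] EuclideanSpace ℝ (Fin m))
    (S : Set (EuclideanSpace ℝ (Fin n)))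
    (γ δ : ℝ) (hγ : 0 < γ) (hδ : 0 ≤ δ)
    (hSREC : ∀ x₁ ∈ S, ∀ x₂ ∈ S, γ * ‖x₁ - x₂‖ - δ ≤ ‖A (x₁ - x₂)‖)
    (xstar : EuclideanSpace ℝ (Fin n)) (ζ : EuclideanSpace ℝ (Fin m))
    (y : EuclideanSpace ℝ (Fin m)) (hy : y = A xstar + ζ)
    (ε : ℝ) (hε : 0 ≤ ε)
    (xhat : EuclideanSpace ℝ (Fin n)) (hxhat : xhat ∈ S)
    (hmin : ∀ x ∈ S, ‖A xhat - y‖ ≤ ‖A x - y‖ + ε) :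
    (∀ x ∈ S, ‖xhat - x‖ ≤ (2 * ‖A (x - xstar)‖ + 2 * ‖ζ‖ + ε + δ) / γ) ∧
    (xstar ∈ S → ‖xhat - xstar‖ ≤ (2 * ‖ζ‖ + ε + δ) / γ) := by
  have main : ∀ x ∈ S, ‖xhat - x‖ ≤ (2 * ‖A (x - xstar)‖ + 2 * ‖ζ‖ + ε + δ) / γ := by
    intro x hx
    have h1 : γ * ‖xhat - x‖ - δ ≤ ‖A (xhat - x)‖ := hSREC xhat hxhat x hx
    have h2 : ‖A (xhat - x)‖ ≤ ‖A xhat - y‖ + ‖A x - y‖ := by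
      have : A (xhat - x) = (A xhat - y) - (A x - y) := by
        rw [map_sub]; abel
      rw [this]
      exact norm_sub_le _ _
    have h3 : ‖A x - y‖ ≤ ‖A (x - xstar)‖ + ‖ζ‖ := by
      have : A x - y = A (x - xstar) - ζ := by
        rw [hy, map_sub]; abel
      rw [this]
      exact norm_sub_le _ _
    have h4 : γ * ‖xhat - x‖ ≤ 2 * ‖A (x - xstar)‖ + 2 * ‖ζ‖ + ε + δ := by
      have h5 := hmin x hx
      nlinarith
    rw [le_div_iff₀ hγ]
    linarith
  refine ⟨main, fun hxs => ?_⟩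
  have := main xstar hxs
  simpa using this
end
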